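/- arXiv:1502.05012 — 4 statements merged into one kernel-verified Lean document; each statement's English description precedes it below -/
import Mathlib

section
/- Let E be a real Banach lattice with a 1-unconditional basis (e_i), let n ≥ 1 and m ≥ 1 be integers, let a₁, …, a_m ∈ ℝ, and let θ₁, …, θ_m ∈ {−1, 1}. Then sup{ |∑_{i=1}^m θ_i a_i x*₁(e_i) ⋯ x*ₙ(e_i)| : x*₁, …, x*ₙ ∈ B_{E*} } = sup{ |∑_{i=1}^m a_i x*₁(e_i) ⋯ x*ₙ(e_i)| : x*₁, …, x*ₙ ∈ B_{E*} }. Equivalently, ‖∑_{i=1}^m θ_i a_i e_i ⊗ ⋯ ⊗ e_i‖_ε = ‖∑_{i=1}^m a_i e_i ⊗ ⋯ ⊗ e_i‖_ε, so the tensor diagonal {e_i ⊗ ⋯ ⊗ e_i : i ∈ ℕ} is a 1-unconditional basic sequence in the n-fold injective tensor product of E. -/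
open scoped BigOperators

lemma signOp_exists
    (E : Type*) [NormedAddCommGroup E] [Lattice E] [IsOrderedAddMonoid E] [HasSolidNorm E] [NormedSpace ℝ E] [CompleteSpace E]
    (e : ℕ → E) (f : ℕ → E →L[ℝ] ℝ)
    (hBi : ∀ i j : ℕ, f i (e j) = if i = j then 1 else 0)
    (hExp : ∀ x : E, HasSum (fun i => f i x • e i) x)
    (hUnc : ∀ (a θ : ℕ → ℝ), (∀ i, θ i = 1 ∨ θ i = -1) →
      ∀ s : Finset ℕ, ‖∑ i ∈ s, (θ i * a i) • e i‖ = ‖∑ i ∈ s, a i • e i‖)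
    (ε : ℕ → ℝ) (hε : ∀ i, ε i = 1 ∨ ε i = -1) :
    ∃ T : E →L[ℝ] E, ‖T‖ ≤ 1 ∧ ∀ i, T (e i) = ε i • e i := by
  have hnorm : ∀ (x : E) (s : Finset ℕ),
      ‖∑ i ∈ s, (ε i * f i x) • e i‖ = ‖∑ i ∈ s, f i x • e i‖ := fun x s =>
    hUnc (fun i => f i x) ε hε s
  have hsum : ∀ x : E, Summable (fun i => (ε i * f i x) • e i) := by
    intro x
    rw [summable_iff_vanishing]
    intro U hU
    obtain ⟨r, hr, hball⟩ := Metric.mem_nhds_iff.mp hU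
    obtain ⟨s, hs⟩ := (summable_iff_vanishing.mp (hExp x).summable) (Metric.ball 0 r)
      (Metric.ball_mem_nhds 0 hr)
    refine ⟨s, fun t ht => hball ?_⟩
    have h1 : ‖∑ i ∈ t, f i x • e i‖ < r := by
      simpa [Metric.mem_ball, dist_zero_right] using hs t ht
    simpa [Metric.mem_ball, dist_zero_right, hnorm x t] using h1
  set g : E → E := fun x => ∑' i, (ε i * f i x) • e i with hg
  have hT : ∀ x : E, HasSum (fun i => (ε i * f i x) • e i) (g x) := fun x => (hsum x).hasSum
  have hnormg : ∀ x : E, ‖g x‖ = ‖x‖ := by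
    intro x
    have h1 : Filter.Tendsto (fun s : Finset ℕ => ‖∑ i ∈ s, (ε i * f i x) • e i‖)
        Filter.atTop (nhds ‖g x‖) := (continuous_norm.tendsto _).comp (hT x)
    have h2 : Filter.Tendsto (fun s : Finset ℕ => ‖∑ i ∈ s, f i x • e i‖)
        Filter.atTop (nhds ‖x‖) := (continuous_norm.tendsto _).comp (hExp x)
    have h3 : (fun s : Finset ℕ => ‖∑ i ∈ s, (ε i * f i x) • e i‖)
        = fun s : Finset ℕ => ‖∑ i ∈ s, f i x • e i‖ := funext (hnorm x)
    exact tendsto_nhds_unique h1 (h3 ▸ h2)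
  have hge : ∀ j, g (e j) = ε j • e j := by
    intro j
    have h4 : ∀ i, (ε i * f i (e j)) • e i = if i = j then ε j • e j else 0 := by
      intro i
      by_cases h : i = j <;> simp [hBi, h]
    rw [hg]
    simp_rw [h4]
    exact tsum_ite_eq j (fun _ => ε j • e j)
  have hgadd : ∀ x y : E, g (x + y) = g x + g y := by
    intro x y
    have h5 : ∀ i, (ε i * f i (x + y)) • e i
        = (ε i * f i x) • e i + (ε i * f i y) • e i := by
      intro i; rw [map_add, mul_add, add_smul]
    rw [hg]
    simp_rw [h5]
    exact Summable.tsum_add (hsum x) (hsum y)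
  have hgsmul : ∀ (c : ℝ) (x : E), g (c • x) = c • g x := by
    intro c x
    have h6 : ∀ i, (ε i * f i (c • x)) • e i = c • ((ε i * f i x) • e i) := by
      intro i
      rw [map_smul]
      simp only [smul_eq_mul, smul_smul]
      ring_nf
    rw [hg]
    simp_rw [h6]
    exact Summable.tsum_const_smul c (hsum x)
  set Tl : E →ₗ[ℝ] E :=
    { toFun := g
      map_add' := hgadd
      map_smul' := hgsmul } with hTl
  refine ⟨Tl.mkContinuous 1 (fun x => by
      show ‖g x‖ ≤ 1 * ‖x‖
      rw [hnormg x, one_mul]), ?_, ?_⟩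
  · exact LinearMap.mkContinuous_norm_le Tl zero_le_one _
  · intro j
    show g (e j) = ε j • e j
    exact hge j

/-- Part of Lemma 3.1: for a Banach lattice `E` with a 1-unconditional basis `(eᵢ)` (with
coordinate functionals `(fᵢ)`, order defined coordinatewise), changing the signs of the
coefficients of a diagonal tensor `∑ᵢ aᵢ eᵢ ⊗ ⋯ ⊗ eᵢ` does not change its injective tensor
norm; i.e. the tensor diagonal is a 1-unconditional basic sequence in `⊗̌_{n,ε} E`. -/
theorem stmt_4
    (E : Type*) [NormedAddCommGroup E] [Lattice E] [IsOrderedAddMonoid E] [HasSolidNorm E] [NormedSpace ℝ E] [CompleteSpace E]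
    (e : ℕ → E) (f : ℕ → E →L[ℝ] ℝ)
    (hBi : ∀ i j : ℕ, f i (e j) = if i = j then 1 else 0)
    (hExp : ∀ x : E, HasSum (fun i => f i x • e i) x)
    (hUnc : ∀ (a θ : ℕ → ℝ), (∀ i, θ i = 1 ∨ θ i = -1) →
      ∀ s : Finset ℕ, ‖∑ i ∈ s, (θ i * a i) • e i‖ = ‖∑ i ∈ s, a i • e i‖)
    (hPos : ∀ x : E, 0 ≤ x ↔ ∀ i, 0 ≤ f i x)
    (n m : ℕ) (hn : 1 ≤ n) (hm : 1 ≤ m)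
    (a θ : Fin m → ℝ) (hθ : ∀ i, θ i = 1 ∨ θ i = -1) :
    sSup {r : ℝ | ∃ φ : Fin n → E →L[ℝ] ℝ, (∀ j, ‖φ j‖ ≤ 1) ∧
        r = |∑ i : Fin m, θ i * a i * ∏ j : Fin n, (φ j) (e i)|}
      = sSup {r : ℝ | ∃ φ : Fin n → E →L[ℝ] ℝ, (∀ j, ‖φ j‖ ≤ 1) ∧
        r = |∑ i : Fin m, a i * ∏ j : Fin n, (φ j) (e i)|} := by
  classical
  set ε : ℕ → ℝ := fun i => if h : i < m then θ ⟨i, h⟩ else 1 with hεdef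
  have hε : ∀ i, ε i = 1 ∨ ε i = -1 := by
    intro i
    by_cases h : i < m
    · simpa [hεdef, h] using hθ ⟨i, h⟩
    · simp [hεdef, h]
  obtain ⟨T, hT1, hTe⟩ := signOp_exists E e f hBi hExp hUnc ε hε
  have hTθ : ∀ i : Fin m, T (e i) = θ i • e i := by
    intro i
    rw [hTe]
    congr 1
    simp [hεdef, i.isLt]
  have hn0 : 0 < n := hn
  set j0 : Fin n := ⟨0, hn0⟩ with hj0
  have core : ∀ φ : Fin n → E →L[ℝ] ℝ, (∀ j, ‖φ j‖ ≤ 1) →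
      ∃ ψ : Fin n → E →L[ℝ] ℝ, (∀ j, ‖ψ j‖ ≤ 1) ∧
        ∀ c : Fin m → ℝ, ∑ i : Fin m, c i * ∏ j : Fin n, (ψ j) (e i)
          = ∑ i : Fin m, θ i * c i * ∏ j : Fin n, (φ j) (e i) := by
    intro φ hφ
    refine ⟨Function.update φ j0 ((φ j0).comp T), ?_, ?_⟩
    · intro j
      by_cases h : j = j0
      · subst h
        rw [Function.update_self]
        calc ‖(φ j0).comp T‖ ≤ ‖φ j0‖ * ‖T‖ := ContinuousLinearMap.opNorm_comp_le _ _
          _ ≤ 1 * 1 := mul_le_mul (hφ j0) hT1 (norm_nonneg T) zero_le_one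
          _ = 1 := one_mul 1
      · rw [Function.update_of_ne h]; exact hφ j
    · intro c
      refine Finset.sum_congr rfl fun i _ => ?_
      have hprod : ∏ j : Fin n, (Function.update φ j0 ((φ j0).comp T) j) (e i)
          = θ i * φ j0 (e i) * ∏ j ∈ Finset.univ.erase j0, (φ j) (e i) := by
        have heq : (fun j : Fin n => (Function.update φ j0 ((φ j0).comp T) j) (e i))
            = Function.update (fun j => (φ j) (e i)) j0 (((φ j0).comp T) (e i)) := by
          funext j
          by_cases h : j = j0
          · subst h; rw [Function.update_self, Function.update_self]
          · rw [Function.update_of_ne h, Function.update_of_ne h]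
        rw [heq, Finset.prod_update_of_mem (Finset.mem_univ j0)]
        have : ((φ j0).comp T) (e i) = θ i * φ j0 (e i) := by
          rw [ContinuousLinearMap.comp_apply, hTθ i, map_smul, smul_eq_mul]
        rw [this, Finset.sdiff_singleton_eq_erase]
      rw [hprod, ← Finset.mul_prod_erase Finset.univ (fun j => (φ j) (e i))
        (Finset.mem_univ j0)]
      ring
  congr 1
  ext r
  simp only [Set.mem_setOf_eq]
  constructor
  · rintro ⟨φ, h1, rfl⟩
    obtain ⟨ψ, h2, h3⟩ := core φ h1
    exact ⟨ψ, h2, (congrArg abs (h3 a)).symm⟩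
  · rintro ⟨φ, h1, rfl⟩
    obtain ⟨ψ, h2, h3⟩ := core φ h1
    refine ⟨ψ, h2, ?_⟩
    have h4 := h3 (fun i => θ i * a i)
    have h5 : ∑ i : Fin m, θ i * (θ i * a i) * ∏ j : Fin n, (φ j) (e i)
        = ∑ i : Fin m, a i * ∏ j : Fin n, (φ j) (e i) := by
      refine Finset.sum_congr rfl fun i _ => ?_
      rcases hθ i with h | h <;> rw [h] <;> ring
    rw [← h5, ← h4]
end

section
/- Let E be a real Banach lattice with a 1-unconditional basis (e_i), let n ≥ 1 be an integer, and let x*₁, …, x*ₙ ∈ E* be positive continuous linear functionals. Then for every m ≥ 1 and all a₁, …, a_m ∈ ℝ, |∑_{i=1}^m a_i (x*₁(e_i))^{1/n} ⋯ (x*ₙ(e_i))^{1/n}| ≤ ‖x*₁‖^{1/n} ⋯ ‖x*ₙ‖^{1/n} · ‖∑_{i=1}^m a_i e_i‖. Consequently the formula x*(x) = ∑_{i=1}^∞ f_i(x) (x*₁(e_i))^{1/n} ⋯ (x*ₙ(e_i))^{1/n} defines a positive continuous linear functional x* ∈ E* with ‖x*‖ ≤ ‖x*₁‖^{1/n} ⋯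 ‖x*ₙ‖^{1/n}. -/
open scoped BigOperators

theorem my_gen_holder {ι : Type*} (s : Finset ι) (n : ℕ) (hn : 1 ≤ n) (b : Fin n → ι → ℝ)
    (hb : ∀ j i, 0 ≤ b j i) :
    ∑ i ∈ s, ∏ j : Fin n, (b j i) ^ ((1 : ℝ) / n) ≤
      ∏ j : Fin n, (∑ i ∈ s, b j i) ^ ((1 : ℝ) / n) := by
  have hn0 : (n : ℝ) ≠ 0 := Nat.cast_ne_zero.2 (by omega)
  by_cases hz : ∃ j₀ : Fin n, ∑ i ∈ s, b j₀ i = 0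
  · obtain ⟨j₀, hj₀⟩ := hz
    have hb0 : ∀ i ∈ s, b j₀ i = 0 := by
      intro i hi
      exact (Finset.sum_eq_zero_iff_of_nonneg (fun i _ => hb j₀ i)).1 hj₀ i hi
    have : ∑ i ∈ s, ∏ j : Fin n, (b j i) ^ ((1 : ℝ) / n) = 0 := by
      apply Finset.sum_eq_zero
      intro i hi
      apply Finset.prod_eq_zero (Finset.mem_univ j₀)
      rw [hb0 i hi, Real.zero_rpow (by positivity)]
    rw [this]
    exact Finset.prod_nonneg fun j _ => Real.rpow_nonneg (Finset.sum_nonneg fun i _ => hb j i) _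
  · push_neg at hz
    set S : Fin n → ℝ := fun j => ∑ i ∈ s, b j i with hS
    have hSpos : ∀ j, 0 < S j := fun j =>
      lt_of_le_of_ne (Finset.sum_nonneg fun i _ => hb j i) (Ne.symm (hz j))
    have key : ∀ i ∈ s, ∏ j : Fin n, (b j i / S j) ^ ((1 : ℝ) / n) ≤
        ∑ j : Fin n, (1 / n : ℝ) * (b j i / S j) := by
      intro i _
      exact Real.geom_mean_le_arith_mean_weighted Finset.univ (fun _ => (1 / n : ℝ))
        (fun j => b j i / S j) (fun j _ => by positivity)
        (by rw [Finset.sum_const, Finset.card_univ, Fintype.card_fin, nsmul_eq_mul]; field_simp)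
        (fun j _ => div_nonneg (hb j i) (hSpos j).le)
    have hsum : ∑ i ∈ s, ∏ j : Fin n, (b j i / S j) ^ ((1 : ℝ) / n) ≤ 1 := by
      calc ∑ i ∈ s, ∏ j : Fin n, (b j i / S j) ^ ((1 : ℝ) / n)
          ≤ ∑ i ∈ s, ∑ j : Fin n, (1 / n : ℝ) * (b j i / S j) := Finset.sum_le_sum key
        _ = ∑ j : Fin n, (1 / n : ℝ) * ((∑ i ∈ s, b j i) / S j) := by
            rw [Finset.sum_comm]
            refine Finset.sum_congr rfl fun j _ => ?_
            rw [← Finset.mul_sum, ← Finset.sum_div]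
        _ = ∑ j : Fin n, (1 / n : ℝ) := by
            refine Finset.sum_congr rfl fun j _ => ?_
            show (1 / n : ℝ) * (S j / S j) = 1 / n
            rw [div_self (hSpos j).ne', mul_one]
        _ = 1 := by
            rw [Finset.sum_const, Finset.card_univ, Fintype.card_fin, nsmul_eq_mul]; field_simp
    have hfact : ∀ i, ∏ j : Fin n, (b j i / S j) ^ ((1 : ℝ) / n) =
        (∏ j : Fin n, (b j i) ^ ((1 : ℝ) / n)) / ∏ j : Fin n, (S j) ^ ((1 : ℝ) / n) := by
      intro i
      rw [← Finset.prod_div_distrib]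
      exact Finset.prod_congr rfl fun j _ => Real.div_rpow (hb j i) (hSpos j).le _
    have hprodpos : 0 < ∏ j : Fin n, (S j) ^ ((1 : ℝ) / n) :=
      Finset.prod_pos fun j _ => Real.rpow_pos_of_pos (hSpos j) _
    calc ∑ i ∈ s, ∏ j : Fin n, (b j i) ^ ((1 : ℝ) / n)
        = (∑ i ∈ s, ∏ j : Fin n, (b j i / S j) ^ ((1 : ℝ) / n)) *
            ∏ j : Fin n, (S j) ^ ((1 : ℝ) / n) := by
          rw [Finset.sum_mul]
          refine Finset.sum_congr rfl fun i _ => ?_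
          rw [hfact i, div_mul_cancel₀]
          exact hprodpos.ne'
      _ ≤ 1 * ∏ j : Fin n, (S j) ^ ((1 : ℝ) / n) :=
          mul_le_mul_of_nonneg_right hsum hprodpos.le
      _ = ∏ j : Fin n, (S j) ^ ((1 : ℝ) / n) := one_mul _

theorem my_key
    (E : Type*) [NormedAddCommGroup E] [Lattice E] [IsOrderedAddMonoid E] [HasSolidNorm E] [NormedSpace ℝ E]
    (e : ℕ → E) (hU : ∀ (a : ℕ → ℝ) (s : Finset ℕ),
      ‖∑ i ∈ s, |a i| • e i‖ = ‖∑ i ∈ s, a i • e i‖)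
    (he : ∀ i, (0 : E) ≤ e i)
    (n : ℕ) (hn : 1 ≤ n)
    (xs : Fin n → E →L[ℝ] ℝ) (hxs : ∀ j, ∀ x : E, 0 ≤ x → 0 ≤ xs j x)
    (s : Finset ℕ) (a : ℕ → ℝ)
    (holder : ∀ (b : Fin n → ℕ → ℝ), (∀ j i, 0 ≤ b j i) →
      ∑ i ∈ s, ∏ j : Fin n, (b j i) ^ ((1 : ℝ) / n) ≤
        ∏ j : Fin n, (∑ i ∈ s, b j i) ^ ((1 : ℝ) / n)) :
    |∑ i ∈ s, a i * ∏ j : Fin n, (xs j (e i)) ^ ((1 : ℝ) / n)|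
      ≤ (∏ j : Fin n, ‖xs j‖ ^ ((1 : ℝ) / n)) * ‖∑ i ∈ s, a i • e i‖ := by
  have hn0 : (n : ℝ) ≠ 0 := Nat.cast_ne_zero.2 (by omega)
  have hxe : ∀ j i, 0 ≤ xs j (e i) := fun j i => hxs j _ (he i)
  set c : ℕ → ℝ := fun i => ∏ j : Fin n, (xs j (e i)) ^ ((1 : ℝ) / n) with hc_def
  have hc : ∀ i, 0 ≤ c i := fun i =>
    Finset.prod_nonneg fun j _ => Real.rpow_nonneg (hxe j i) _
  -- introduce the positive element y
  set y : E := ∑ i ∈ s, |a i| • e i with hy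
  have hynorm : ‖y‖ = ‖∑ i ∈ s, a i • e i‖ := hU a s
  have habs : ∀ t : ℝ, 0 ≤ t → ∏ _j : Fin n, t ^ ((1 : ℝ) / n) = t := by
    intro t ht
    rw [Finset.prod_const, Finset.card_univ, Fintype.card_fin,
      ← Real.rpow_natCast (t ^ ((1 : ℝ) / n)) n, ← Real.rpow_mul ht,
      one_div, inv_mul_cancel₀ hn0, Real.rpow_one]
  -- step 1
  have step1 : |∑ i ∈ s, a i * c i| ≤ ∑ i ∈ s, |a i| * c i := by
    refine (Finset.abs_sum_le_sum_abs _ _).trans_eq ?_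
    exact Finset.sum_congr rfl fun i _ => by rw [abs_mul, abs_of_nonneg (hc i)]
  -- step 2: rewrite as product form
  have step2 : ∑ i ∈ s, |a i| * c i =
      ∑ i ∈ s, ∏ j : Fin n, (|a i| * xs j (e i)) ^ ((1 : ℝ) / n) := by
    refine Finset.sum_congr rfl fun i _ => ?_
    have : ∏ j : Fin n, (|a i| * xs j (e i)) ^ ((1 : ℝ) / n)
        = ∏ j : Fin n, |a i| ^ ((1 : ℝ) / n) * (xs j (e i)) ^ ((1 : ℝ) / n) :=
      Finset.prod_congr rfl fun j _ => Real.mul_rpow (abs_nonneg _) (hxe j i)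
    rw [this, Finset.prod_mul_distrib, habs _ (abs_nonneg _)]
  -- step 3: Hölder
  have step3 : ∑ i ∈ s, ∏ j : Fin n, (|a i| * xs j (e i)) ^ ((1 : ℝ) / n)
      ≤ ∏ j : Fin n, (∑ i ∈ s, |a i| * xs j (e i)) ^ ((1 : ℝ) / n) :=
    holder (fun j i => |a i| * xs j (e i))
      (fun j i => mul_nonneg (abs_nonneg _) (hxe j i))
  -- step 4/5: each inner sum is xs j y ≤ ‖xs j‖ ‖y‖
  have step4 : ∀ j, ∑ i ∈ s, |a i| * xs j (e i) ≤ ‖xs j‖ * ‖y‖ := by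
    intro j
    have : ∑ i ∈ s, |a i| * xs j (e i) = xs j y := by
      rw [hy, map_sum]
      exact Finset.sum_congr rfl fun i _ => by rw [map_smul, smul_eq_mul]
    rw [this]
    exact (le_abs_self _).trans ((Real.norm_eq_abs _) ▸ (xs j).le_opNorm y)
  -- step 6: conclude
  have step6 : ∏ j : Fin n, (∑ i ∈ s, |a i| * xs j (e i)) ^ ((1 : ℝ) / n)
      ≤ ∏ j : Fin n, (‖xs j‖ * ‖y‖) ^ ((1 : ℝ) / n) := by
    refine Finset.prod_le_prod (fun j _ => Real.rpow_nonneg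
      (Finset.sum_nonneg fun i _ => mul_nonneg (abs_nonneg _) (hxe j i)) _)
      (fun j _ => Real.rpow_le_rpow
        (Finset.sum_nonneg fun i _ => mul_nonneg (abs_nonneg _) (hxe j i)) (step4 j)
        (by positivity))
  have step7 : ∏ j : Fin n, (‖xs j‖ * ‖y‖) ^ ((1 : ℝ) / n)
      = (∏ j : Fin n, ‖xs j‖ ^ ((1 : ℝ) / n)) * ‖y‖ := by
    have : ∏ j : Fin n, (‖xs j‖ * ‖y‖) ^ ((1 : ℝ) / n)
        = ∏ j : Fin n, ‖xs j‖ ^ ((1 : ℝ) / n) * ‖y‖ ^ ((1 : ℝ) / n) :=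
      Finset.prod_congr rfl fun j _ => Real.mul_rpow (norm_nonneg _) (norm_nonneg _)
    rw [this, Finset.prod_mul_distrib]
    congr 1
    exact habs _ (norm_nonneg _)
  calc |∑ i ∈ s, a i * c i| ≤ ∑ i ∈ s, |a i| * c i := step1
    _ = ∑ i ∈ s, ∏ j : Fin n, (|a i| * xs j (e i)) ^ ((1 : ℝ) / n) := step2
    _ ≤ ∏ j : Fin n, (∑ i ∈ s, |a i| * xs j (e i)) ^ ((1 : ℝ) / n) := step3
    _ ≤ ∏ j : Fin n, (‖xs j‖ * ‖y‖) ^ ((1 : ℝ) / n) := step6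
    _ = (∏ j : Fin n, ‖xs j‖ ^ ((1 : ℝ) / n)) * ‖y‖ := step7
    _ = (∏ j : Fin n, ‖xs j‖ ^ ((1 : ℝ) / n)) * ‖∑ i ∈ s, a i • e i‖ := by rw [hynorm]

/-- Lemma 3.5: for positive functionals `x*₁, …, x*ₙ` on a Banach lattice `E` with a
1-unconditional basis `(eᵢ)`, the coordinatewise geometric mean
`x*(x) = ∑ᵢ fᵢ(x) (x*₁(eᵢ))^{1/n} ⋯ (x*ₙ(eᵢ))^{1/n}` satisfies the Hölder-type inequality on
finite sums and defines a positive continuous functional with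
`‖x*‖ ≤ ‖x*₁‖^{1/n} ⋯ ‖x*ₙ‖^{1/n}`. -/
theorem stmt_9
    (E : Type*) [NormedAddCommGroup E] [Lattice E] [IsOrderedAddMonoid E] [HasSolidNorm E] [NormedSpace ℝ E] [CompleteSpace E]
    (e : ℕ → E) (f : ℕ → E →L[ℝ] ℝ)
    (hBi : ∀ i j : ℕ, f i (e j) = if i = j then 1 else 0)
    (hExp : ∀ x : E, HasSum (fun i => f i x • e i) x)
    (hUnc : ∀ (a θ : ℕ → ℝ), (∀ i, θ i = 1 ∨ θ i = -1) →
      ∀ s : Finset ℕ, ‖∑ i ∈ s, (θ i * a i) • e i‖ = ‖∑ i ∈ s, a i • e i‖)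
    (hPos : ∀ x : E, 0 ≤ x ↔ ∀ i, 0 ≤ f i x)
    (n : ℕ) (hn : 1 ≤ n)
    (xs : Fin n → E →L[ℝ] ℝ) (hxs : ∀ j, ∀ x : E, 0 ≤ x → 0 ≤ xs j x) :
    (∀ m : ℕ, 1 ≤ m → ∀ a : Fin m → ℝ,
      |∑ i : Fin m, a i * ∏ j : Fin n, (xs j (e i)) ^ ((1 : ℝ) / n)|
        ≤ (∏ j : Fin n, ‖xs j‖ ^ ((1 : ℝ) / n)) * ‖∑ i : Fin m, a i • e i‖) ∧
    ∃ xstar : E →L[ℝ] ℝ,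
      (∀ x : E, 0 ≤ x → 0 ≤ xstar x) ∧
      ‖xstar‖ ≤ ∏ j : Fin n, ‖xs j‖ ^ ((1 : ℝ) / n) ∧
      ∀ x : E, HasSum (fun i => f i x * ∏ j : Fin n, (xs j (e i)) ^ ((1 : ℝ) / n)) (xstar x) := by
  classical
  have he : ∀ i, (0 : E) ≤ e i := by
    intro i
    rw [hPos]
    intro k
    rw [hBi]
    split <;> norm_num
  have hU : ∀ (a : ℕ → ℝ) (s : Finset ℕ),
      ‖∑ i ∈ s, |a i| • e i‖ = ‖∑ i ∈ s, a i • e i‖ := by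
    intro a s
    have h := hUnc a (fun i => if a i < 0 then -1 else 1)
      (fun i => by by_cases h : a i < 0 <;> simp [h]) s
    rw [← h]
    congr 1
    refine Finset.sum_congr rfl fun i _ => ?_
    congr 1
    by_cases hai : a i < 0
    · simp [hai, abs_of_neg hai]
    · simp [hai, abs_of_nonneg (not_lt.1 hai)]
  set C : ℝ := ∏ j : Fin n, ‖xs j‖ ^ ((1 : ℝ) / n) with hC_def
  have hC : 0 ≤ C := Finset.prod_nonneg fun j _ => Real.rpow_nonneg (norm_nonneg _) _
  set c : ℕ → ℝ := fun i => ∏ j : Fin n, (xs j (e i)) ^ ((1 : ℝ) / n) with hc_def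
  have hc : ∀ i, 0 ≤ c i := fun i =>
    Finset.prod_nonneg fun j _ => Real.rpow_nonneg (hxs j _ (he i)) _
  have key : ∀ (s : Finset ℕ) (a : ℕ → ℝ),
      |∑ i ∈ s, a i * c i| ≤ C * ‖∑ i ∈ s, a i • e i‖ := fun s a =>
    my_key E e hU he n hn xs hxs s a (fun b hb => my_gen_holder s n hn b hb)
  constructor
  · -- part 1
    intro m _ a
    set a' : ℕ → ℝ := fun i => if h : i < m then a ⟨i, h⟩ else 0 with ha'
    have h1 : ∑ i : Fin m, a i * c i = ∑ i ∈ Finset.range m, a' i * c i := by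
      rw [← Fin.sum_univ_eq_sum_range (fun i => a' i * c i) m]
      exact Finset.sum_congr rfl fun i _ => by simp [ha', i.isLt]
    have h2 : ∑ i : Fin m, a i • e i = ∑ i ∈ Finset.range m, a' i • e i := by
      rw [← Fin.sum_univ_eq_sum_range (fun i => a' i • e i) m]
      exact Finset.sum_congr rfl fun i _ => by simp [ha', i.isLt]
    rw [show (∑ i : Fin m, a i * ∏ j : Fin n, (xs j (e i)) ^ ((1 : ℝ) / n))
        = ∑ i : Fin m, a i * c i from rfl, h1, h2]
    exact key (Finset.range m) a'
  · -- part 2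
    have hsummable : ∀ x : E, Summable fun i => f i x * c i := by
      intro x
      rw [summable_iff_vanishing]
      intro U hU'
      obtain ⟨ε, hε, hball⟩ := Metric.mem_nhds_iff.1 hU'
      have hv := summable_iff_vanishing.1 (hExp x).summable
        (Metric.ball 0 (ε / (C + 1))) (Metric.ball_mem_nhds 0 (by positivity))
      obtain ⟨s, hs⟩ := hv
      refine ⟨s, fun t ht => ?_⟩
      apply hball
      rw [Metric.mem_ball, dist_zero_right, Real.norm_eq_abs]
      calc |∑ i ∈ t, f i x * c i| ≤ C * ‖∑ i ∈ t, f i x • e i‖ := key t _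
        _ ≤ C * (ε / (C + 1)) := by
            refine mul_le_mul_of_nonneg_left ?_ hC
            have := hs t ht
            rw [Metric.mem_ball, dist_zero_right] at this
            exact this.le
        _ < ε := by
            rw [div_eq_inv_mul, ← mul_assoc]
            have h1 : C * (C + 1)⁻¹ < 1 := by
              rw [mul_inv_lt_iff₀ (by positivity), one_mul]
              linarith
            nlinarith
    set g : E → ℝ := fun x => ∑' i, f i x * c i with hg_def
    have hbound : ∀ x : E, |g x| ≤ C * ‖x‖ := by
      intro x
      have hps := (hsummable x).hasSum.tendsto_sum_nat
      have h2 := (hExp x).tendsto_sum_nat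
      exact le_of_tendsto_of_tendsto' hps.abs ((h2.norm).const_mul C)
        (fun m => key (Finset.range m) fun i => f i x)
    have hadd : ∀ x y : E, g (x + y) = g x + g y := by
      intro x y
      have h1 : (fun i => f i (x + y) * c i)
          = fun i => f i x * c i + f i y * c i := by
        funext i; rw [map_add, add_mul]
      rw [hg_def]
      simp only [h1]
      exact Summable.tsum_add (hsummable x) (hsummable y)
    have hsmul : ∀ (r : ℝ) (x : E), g (r • x) = r * g x := by
      intro r x
      have h1 : (fun i => f i (r • x) * c i) = fun i => r * (f i x * c i) := by
        funext i; rw [map_smul, smul_eq_mul, mul_assoc]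
      rw [hg_def]
      simp only [h1]
      exact tsum_mul_left
    let L : E →ₗ[ℝ] ℝ :=
      { toFun := g, map_add' := hadd, map_smul' := hsmul }
    have hLbound : ∀ x : E, ‖L x‖ ≤ C * ‖x‖ := fun x => by
      rw [Real.norm_eq_abs]; exact hbound x
    refine ⟨L.mkContinuous C hLbound, ?_, ?_, ?_⟩
    · intro x hx
      exact tsum_nonneg fun i => mul_nonneg ((hPos x).1 hx i) (hc i)
    · exact L.mkContinuous_norm_le hC hLbound
    · intro x
      exact (hsummable x).hasSum
end

section
/- Let E be a real Banach lattice with a 1-unconditional basis (e_i), let n ≥ 1 and m ≥ 1 be integers, and let a₁, …, a_m ≥ 0. Then sup{ ∑_{i=1}^m a_i x*₁(e_i) ⋯ x*ₙ(e_i) : x*₁, …, x*ₙ ∈ B⁺_{E*} } = sup{ ∑_{i=1}^m a_i (x*(e_i))ⁿ : x* ∈ B⁺_{E*} }. That is, for every positive diagonal element u = ∑_{i=1}^m a_i e_i ⊗ ⋯ ⊗ e_i one has ‖u‖_{|ε|} = ‖u‖_{s,|ε|}: the positive injective tensor norm of u equals its positive symmetric injective tensor norm. -/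
open scoped BigOperators

private lemma amgm_pow (n : ℕ) (hn : n ≠ 0) (x : Fin n → ℝ) (hx : ∀ j, 0 ≤ x j) :
    ∏ j, x j ≤ (n : ℝ)⁻¹ * ∑ j, x j ^ n := by
  have h := Real.geom_mean_le_arith_mean_weighted Finset.univ (fun _ : Fin n => (n : ℝ)⁻¹)
      (fun j => x j ^ n) (fun i _ => by positivity)
      (by
        have : ((n : ℝ))⁻¹ ≠ 0 := by
          simp [Nat.cast_ne_zero.mpr hn]
        simp [Finset.card_univ, mul_inv_cancel₀ (Nat.cast_ne_zero.mpr hn : (n:ℝ) ≠ 0)])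
      (fun i _ => pow_nonneg (hx i) n)
  have h2 : ∀ j : Fin n, (x j ^ n) ^ ((n : ℝ)⁻¹) = x j := fun j =>
    Real.pow_rpow_inv_natCast (hx j) hn
  calc ∏ j, x j = ∏ j, (x j ^ n) ^ ((n : ℝ)⁻¹) := by simp [h2]
    _ ≤ ∑ j, (n : ℝ)⁻¹ * x j ^ n := h
    _ = (n : ℝ)⁻¹ * ∑ j, x j ^ n := by rw [Finset.mul_sum]

/-- From the proof of Theorem 3.6: for a Banach lattice `E` with a 1-unconditional basis
`(eᵢ)` and a positive diagonal tensor `u = ∑ᵢ aᵢ eᵢ ⊗ ⋯ ⊗ eᵢ` (`aᵢ ≥ 0`), the positive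
injective tensor norm of `u` (supremum over positive functionals in the dual unit ball)
equals its positive symmetric injective tensor norm. -/
theorem stmt_10
    (E : Type*) [NormedAddCommGroup E] [Lattice E] [HasSolidNorm E] [IsOrderedAddMonoid E] [NormedSpace ℝ E] [CompleteSpace E]
    (e : ℕ → E) (f : ℕ → E →L[ℝ] ℝ)
    (hBi : ∀ i j : ℕ, f i (e j) = if i = j then 1 else 0)
    (hExp : ∀ x : E, HasSum (fun i => f i x • e i) x)
    (hUnc : ∀ (a θ : ℕ → ℝ), (∀ i, θ i = 1 ∨ θ i = -1) →
      ∀ s : Finset ℕ, ‖∑ i ∈ s, (θ i * a i) • e i‖ = ‖∑ i ∈ s, a i • e i‖)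
    (hPos : ∀ x : E, 0 ≤ x ↔ ∀ i, 0 ≤ f i x)
    (n m : ℕ) (hn : 1 ≤ n) (hm : 1 ≤ m)
    (a : Fin m → ℝ) (ha : ∀ i, 0 ≤ a i) :
    sSup {r : ℝ | ∃ φ : Fin n → E →L[ℝ] ℝ,
        (∀ j, ‖φ j‖ ≤ 1 ∧ ∀ x : E, 0 ≤ x → 0 ≤ (φ j) x) ∧
        r = ∑ i : Fin m, a i * ∏ j : Fin n, (φ j) (e i)}
      = sSup {r : ℝ | ∃ φ : E →L[ℝ] ℝ,
        (‖φ‖ ≤ 1 ∧ ∀ x : E, 0 ≤ x → 0 ≤ φ x) ∧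
        r = ∑ i : Fin m, a i * (φ (e i)) ^ n} := by
  set A := {r : ℝ | ∃ φ : Fin n → E →L[ℝ] ℝ,
        (∀ j, ‖φ j‖ ≤ 1 ∧ ∀ x : E, 0 ≤ x → 0 ≤ (φ j) x) ∧
        r = ∑ i : Fin m, a i * ∏ j : Fin n, (φ j) (e i)} with hA
  set B := {r : ℝ | ∃ φ : E →L[ℝ] ℝ,
        (‖φ‖ ≤ 1 ∧ ∀ x : E, 0 ≤ x → 0 ≤ φ x) ∧
        r = ∑ i : Fin m, a i * (φ (e i)) ^ n} with hB
  have hn0 : n ≠ 0 := Nat.one_le_iff_ne_zero.mp hn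
  have hepos : ∀ i : ℕ, (0 : E) ≤ e i := by
    intro i
    rw [hPos]
    intro k
    rw [hBi]
    split <;> norm_num
  -- nonnegativity and bounds for values of positive norm-≤1 functionals
  have hval : ∀ (φ : E →L[ℝ] ℝ), ‖φ‖ ≤ 1 → (∀ x : E, 0 ≤ x → 0 ≤ φ x) →
      ∀ i : ℕ, 0 ≤ φ (e i) ∧ φ (e i) ≤ ‖e i‖ := by
    intro φ h1 h2 i
    refine ⟨h2 _ (hepos i), ?_⟩
    calc φ (e i) ≤ |φ (e i)| := le_abs_self _
      _ ≤ ‖φ‖ * ‖e i‖ := φ.le_opNorm (e i)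
      _ ≤ 1 * ‖e i‖ := by gcongr
      _ = ‖e i‖ := one_mul _
  have hbddB : BddAbove B := by
    refine ⟨∑ i : Fin m, a i * ‖e (i : ℕ)‖ ^ n, ?_⟩
    rintro r ⟨φ, ⟨h1, h2⟩, rfl⟩
    apply Finset.sum_le_sum
    intro i _
    have := hval φ h1 h2 i
    exact mul_le_mul_of_nonneg_left (pow_le_pow_left₀ this.1 this.2 n) (ha i)
  have hbddA : BddAbove A := by
    refine ⟨∑ i : Fin m, a i * ‖e (i : ℕ)‖ ^ n, ?_⟩
    rintro r ⟨φ, hφ, rfl⟩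
    apply Finset.sum_le_sum
    intro i _
    refine mul_le_mul_of_nonneg_left ?_ (ha i)
    calc ∏ j : Fin n, (φ j) (e i) ≤ ∏ j : Fin n, ‖e (i : ℕ)‖ :=
          Finset.prod_le_prod (fun j _ => (hval _ (hφ j).1 (hφ j).2 i).1)
            (fun j _ => (hval _ (hφ j).1 (hφ j).2 i).2)
      _ = ‖e (i : ℕ)‖ ^ n := by simp [Finset.prod_const]
  have hBne : B.Nonempty := by
    refine ⟨∑ i : Fin m, a i * ((0 : E →L[ℝ] ℝ) (e (i : ℕ))) ^ n, 0, ⟨?_, ?_⟩, rfl⟩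
    · simp
    · intro x _; simp
  have hAne : A.Nonempty := by
    refine ⟨∑ i : Fin m, a i * ∏ j : Fin n, ((fun _ : Fin n => (0 : E →L[ℝ] ℝ)) j) (e (i : ℕ)),
      (fun _ => 0), fun j => ⟨by simp, fun x _ => by simp⟩, rfl⟩
  apply le_antisymm
  · -- A ≤ sSup B
    apply csSup_le hAne
    rintro r ⟨φ, hφ, rfl⟩
    have key : ∀ j : Fin n, (∑ i : Fin m, a i * ((φ j) (e (i : ℕ))) ^ n) ≤ sSup B :=
      fun j => le_csSup hbddB ⟨φ j, ⟨(hφ j).1, (hφ j).2⟩, rfl⟩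
    calc ∑ i : Fin m, a i * ∏ j : Fin n, (φ j) (e (i : ℕ))
        ≤ ∑ i : Fin m, a i * ((n : ℝ)⁻¹ * ∑ j : Fin n, ((φ j) (e (i : ℕ))) ^ n) := by
          apply Finset.sum_le_sum
          intro i _
          exact mul_le_mul_of_nonneg_left
            (amgm_pow n hn0 _ (fun j => (hval _ (hφ j).1 (hφ j).2 i).1)) (ha i)
      _ = (n : ℝ)⁻¹ * ∑ j : Fin n, ∑ i : Fin m, a i * ((φ j) (e (i : ℕ))) ^ n := by
          simp only [Finset.mul_sum]
          rw [Finset.sum_comm]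
          exact Finset.sum_congr rfl fun j _ => Finset.sum_congr rfl fun i _ => by ring
      _ ≤ (n : ℝ)⁻¹ * ∑ j : Fin n, sSup B := by
          have hnn : (0 : ℝ) ≤ (n : ℝ)⁻¹ := by positivity
          exact mul_le_mul_of_nonneg_left (Finset.sum_le_sum fun j _ => key j) hnn
      _ = sSup B := by
          rw [Finset.sum_const, Finset.card_univ, Fintype.card_fin, nsmul_eq_mul, ← mul_assoc,
            inv_mul_cancel₀ (Nat.cast_ne_zero.mpr hn0), one_mul]
  · -- B ⊆ A
    apply csSup_le_csSup hbddA hBne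
    rintro r ⟨φ, ⟨h1, h2⟩, rfl⟩
    refine ⟨fun _ => φ, fun j => ⟨h1, h2⟩, ?_⟩
    congr 1; ext i
    simp [Finset.prod_const]
end

section
/- Let E be a real Banach lattice with a 1-unconditional basis (e_i), let n ≥ 1 and m ≥ 1 be integers, and let a₁, …, a_m ∈ ℝ. Then sup{ |∑_{i=1}^m a_i x*₁(e_i) ⋯ x*ₙ(e_i)| : x*₁, …, x*ₙ ∈ B_{E*} } = sup{ ∑_{i=1}^m |a_i| x*₁(e_i) ⋯ x*ₙ(e_i) : x*₁, …, x*ₙ ∈ B⁺_{E*} }. That is, for every diagonal element u = ∑_{i=1}^m a_i e_i ⊗ ⋯ ⊗ e_i one has ‖u‖_ε = ‖u‖_{|ε|}: the injective tensor norm of u equals the positive injective tensor norm of |u| = ∑_i |a_i| e_i ⊗ ⋯ ⊗ e_i. -/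
open scoped BigOperators

section aux
variable {E : Type*} [NormedAddCommGroup E] [Lattice E] [HasSolidNorm E] [IsOrderedAddMonoid E] [NormedSpace ℝ E]

lemma aux_proj_le (e : ℕ → E) (f : ℕ → E →L[ℝ] ℝ)
    (hExp : ∀ x : E, HasSum (fun i => f i x • e i) x)
    (hUnc : ∀ (a θ : ℕ → ℝ), (∀ i, θ i = 1 ∨ θ i = -1) →
      ∀ s : Finset ℕ, ‖∑ i ∈ s, (θ i * a i) • e i‖ = ‖∑ i ∈ s, a i • e i‖)
    (x : E) (θ : ℕ → ℝ) (hθ : ∀ i, θ i = 1 ∨ θ i = -1) (s : Finset ℕ) :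
    ‖∑ i ∈ s, (θ i * f i x) • e i‖ ≤ ‖x‖ := by
  rw [hUnc (fun i => f i x) θ hθ s]
  have htend : Filter.Tendsto (fun t : Finset ℕ => ‖∑ i ∈ t, f i x • e i‖)
      Filter.atTop (nhds ‖x‖) := (hExp x).norm
  refine ge_of_tendsto htend (Filter.eventually_atTop.2 ⟨s, fun t hst => ?_⟩)
  set ε : ℕ → ℝ := fun i => if i ∈ s then 1 else -1 with hε
  have hεsign : ∀ i, ε i = 1 ∨ ε i = -1 := fun i => by
    by_cases h : i ∈ s <;> simp [hε, h]
  have key : (∑ i ∈ t, f i x • e i) + ∑ i ∈ t, (ε i * f i x) • e i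
      = (2:ℝ) • ∑ i ∈ s, f i x • e i := by
    rw [← Finset.sum_add_distrib]
    have h1 : ∀ i ∈ t, f i x • e i + (ε i * f i x) • e i
        = if i ∈ s then ((2:ℝ) * f i x) • e i else 0 := by
      intro i _
      by_cases h : i ∈ s
      · simp only [hε, h, if_pos, one_mul]
        module
      · simp only [hε, h, if_neg, if_false, neg_mul, one_mul]
        module
    rw [Finset.sum_congr rfl h1, Finset.sum_ite_mem,
      Finset.inter_eq_right.2 hst, Finset.smul_sum]
    exact Finset.sum_congr rfl fun i _ => by module
  have hnorm := norm_add_le (∑ i ∈ t, f i x • e i) (∑ i ∈ t, (ε i * f i x) • e i)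
  rw [key, hUnc (fun i => f i x) ε hεsign t, norm_smul] at hnorm
  simp only [Real.norm_ofNat] at hnorm
  linarith

end aux

/-- From the proof of Theorem 3.6: for a Banach lattice `E` with a 1-unconditional basis
`(eᵢ)` and a diagonal tensor `u = ∑ᵢ aᵢ eᵢ ⊗ ⋯ ⊗ eᵢ`, the injective tensor norm of `u`
equals the positive injective tensor norm of `|u| = ∑ᵢ |aᵢ| eᵢ ⊗ ⋯ ⊗ eᵢ` (supremum over
positive functionals in the dual unit ball). -/
theorem stmt_11
    (E : Type*) [NormedAddCommGroup E] [Lattice E] [HasSolidNorm E] [IsOrderedAddMonoid E] [NormedSpace ℝ E] [CompleteSpace E]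
    (e : ℕ → E) (f : ℕ → E →L[ℝ] ℝ)
    (hBi : ∀ i j : ℕ, f i (e j) = if i = j then 1 else 0)
    (hExp : ∀ x : E, HasSum (fun i => f i x • e i) x)
    (hUnc : ∀ (a θ : ℕ → ℝ), (∀ i, θ i = 1 ∨ θ i = -1) →
      ∀ s : Finset ℕ, ‖∑ i ∈ s, (θ i * a i) • e i‖ = ‖∑ i ∈ s, a i • e i‖)
    (hPos : ∀ x : E, 0 ≤ x ↔ ∀ i, 0 ≤ f i x)
    (n m : ℕ) (hn : 1 ≤ n) (hm : 1 ≤ m)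
    (a : Fin m → ℝ) :
    sSup {r : ℝ | ∃ φ : Fin n → E →L[ℝ] ℝ, (∀ j, ‖φ j‖ ≤ 1) ∧
        r = |∑ i : Fin m, a i * ∏ j : Fin n, (φ j) (e i)|}
      = sSup {r : ℝ | ∃ φ : Fin n → E →L[ℝ] ℝ,
        (∀ j, ‖φ j‖ ≤ 1 ∧ ∀ x : E, 0 ≤ x → 0 ≤ (φ j) x) ∧
        r = ∑ i : Fin m, |a i| * ∏ j : Fin n, (φ j) (e i)} := by
  classical
  -- basic facts
  have he : ∀ i : ℕ, (0:E) ≤ e i := by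
    intro i
    rw [hPos]
    intro k
    rw [hBi]
    split <;> norm_num
  -- truncated functional construction
  set T : (E →L[ℝ] ℝ) → (ℕ → ℝ) → (E →L[ℝ] ℝ) :=
    fun φ θ => ∑ i ∈ Finset.range m, (θ i * φ (e i)) • (f i) with hT
  have hTapp : ∀ φ θ (x : E), T φ θ x = ∑ i ∈ Finset.range m, (θ i * φ (e i)) * f i x := by
    intro φ θ x
    simp [hT, ContinuousLinearMap.sum_apply, smul_eq_mul]
  have hTe : ∀ φ θ (k : Fin m), T φ θ (e k) = θ k * φ (e k) := by
    intro φ θ k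
    rw [hTapp]
    rw [Finset.sum_eq_single (k : ℕ)]
    · rw [hBi]; simp
    · intro b _ hb; rw [hBi]; simp [hb]
    · intro h; exact absurd (Finset.mem_range.2 k.isLt) h
  have hTnorm : ∀ (φ : E →L[ℝ] ℝ) (θ : ℕ → ℝ), ‖φ‖ ≤ 1 →
      (∀ i, θ i = 1 ∨ θ i = -1) → ‖T φ θ‖ ≤ 1 := by
    intro φ θ hφ hθ
    refine ContinuousLinearMap.opNorm_le_bound _ zero_le_one fun x => ?_
    have h1 : T φ θ x = φ (∑ i ∈ Finset.range m, (θ i * f i x) • e i) := by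
      rw [hTapp, map_sum]
      refine Finset.sum_congr rfl fun i _ => ?_
      rw [map_smul]
      simp [smul_eq_mul]; ring
    rw [h1, Real.norm_eq_abs]
    calc |φ (∑ i ∈ Finset.range m, (θ i * f i x) • e i)|
        ≤ ‖φ‖ * ‖∑ i ∈ Finset.range m, (θ i * f i x) • e i‖ := φ.le_opNorm _
      _ ≤ 1 * ‖x‖ := by
          apply mul_le_mul hφ (aux_proj_le e f hExp hUnc x θ hθ _) (norm_nonneg _)
            zero_le_one
  have habs_bound : ∀ (φ : E →L[ℝ] ℝ) (i : ℕ), ‖φ‖ ≤ 1 → |φ (e i)| ≤ ‖e i‖ := by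
    intro φ i hφ
    calc |φ (e i)| ≤ ‖φ‖ * ‖e i‖ := φ.le_opNorm _
      _ ≤ 1 * ‖e i‖ := mul_le_mul_of_nonneg_right hφ (norm_nonneg _)
      _ = ‖e i‖ := one_mul _
  set S1 := {r : ℝ | ∃ φ : Fin n → E →L[ℝ] ℝ, (∀ j, ‖φ j‖ ≤ 1) ∧
        r = |∑ i : Fin m, a i * ∏ j : Fin n, (φ j) (e i)|} with hS1
  set S2 := {r : ℝ | ∃ φ : Fin n → E →L[ℝ] ℝ,
        (∀ j, ‖φ j‖ ≤ 1 ∧ ∀ x : E, 0 ≤ x → 0 ≤ (φ j) x) ∧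
        r = ∑ i : Fin m, |a i| * ∏ j : Fin n, (φ j) (e i)} with hS2
  have hne1 : S1.Nonempty := by
    refine ⟨0, fun _ => 0, fun j => by simp, ?_⟩
    simp [Finset.prod_const, zero_pow (show n ≠ 0 by omega)]
  have hne2 : S2.Nonempty := by
    refine ⟨0, fun _ => 0, fun j => ⟨by simp, fun x _ => le_refl 0⟩, ?_⟩
    simp [Finset.prod_const, zero_pow (show n ≠ 0 by omega)]
  set C : ℝ := ∑ i : Fin m, |a i| * ‖e (i:ℕ)‖ ^ n with hC
  have hbdd1 : ∀ r ∈ S1, r ≤ C := by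
    rintro r ⟨φ, hφ, rfl⟩
    calc |∑ i : Fin m, a i * ∏ j : Fin n, (φ j) (e i)|
        ≤ ∑ i : Fin m, |a i * ∏ j : Fin n, (φ j) (e i)| := Finset.abs_sum_le_sum_abs _ _
      _ ≤ C := by
          refine Finset.sum_le_sum fun i _ => ?_
          rw [abs_mul, Finset.abs_prod]
          refine mul_le_mul_of_nonneg_left ?_ (abs_nonneg _)
          calc (∏ j : Fin n, |(φ j) (e i)|) ≤ ∏ j : Fin n, ‖e (i:ℕ)‖ :=
                Finset.prod_le_prod (fun j _ => abs_nonneg _)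
                  (fun j _ => habs_bound _ _ (hφ j))
            _ = ‖e (i:ℕ)‖ ^ n := by simp [Finset.prod_const]
  have hbdd2 : ∀ r ∈ S2, r ≤ C := by
    rintro r ⟨φ, hφ, rfl⟩
    refine Finset.sum_le_sum fun i _ => ?_
    refine mul_le_mul_of_nonneg_left ?_ (abs_nonneg _)
    calc (∏ j : Fin n, (φ j) (e i)) ≤ ∏ j : Fin n, ‖e (i:ℕ)‖ :=
          Finset.prod_le_prod (fun j _ => (hφ j).2 _ (he _))
            (fun j _ => (le_abs_self _).trans (habs_bound _ _ (hφ j).1))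
      _ = ‖e (i:ℕ)‖ ^ n := by simp [Finset.prod_const]
  refine le_antisymm ?_ ?_
  · -- sSup S1 ≤ sSup S2
    refine csSup_le hne1 ?_
    rintro r ⟨φ, hφ, rfl⟩
    set θ : Fin n → ℕ → ℝ := fun j i => if 0 ≤ φ j (e i) then 1 else -1 with hθdef
    have hθsign : ∀ j i, θ j i = 1 ∨ θ j i = -1 := fun j i => by
      by_cases h : 0 ≤ φ j (e i) <;> simp [hθdef, h]
    set ψ : Fin n → E →L[ℝ] ℝ := fun j => T (φ j) (θ j) with hψ
    have hψe : ∀ j (i : Fin m), ψ j (e i) = |φ j (e i)| := by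
      intro j i
      rw [hψ, hTe]
      by_cases h : 0 ≤ φ j (e (i:ℕ))
      · rw [hθdef]; simp [h, abs_of_nonneg h]
      · rw [hθdef]; simp [h, abs_of_neg (lt_of_not_ge h)]
    have hmem : (∑ i : Fin m, |a i| * ∏ j : Fin n, (ψ j) (e i)) ∈ S2 := by
      refine ⟨ψ, fun j => ⟨hTnorm _ _ (hφ j) (hθsign j), fun x hx => ?_⟩, rfl⟩
      rw [hψ, hTapp]
      refine Finset.sum_nonneg fun i _ => ?_
      have h1 : 0 ≤ θ j i * φ j (e i) := by
        by_cases h : 0 ≤ φ j (e i)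
        · rw [hθdef]; simpa [h] using h
        · rw [hθdef]
          simp only [h, if_false, neg_mul, one_mul]
          linarith [lt_of_not_ge h]
      exact mul_nonneg h1 ((hPos x).1 hx i)
    refine le_trans ?_ (le_csSup ⟨C, fun r hr => hbdd2 r hr⟩ hmem)
    calc |∑ i : Fin m, a i * ∏ j : Fin n, (φ j) (e i)|
        ≤ ∑ i : Fin m, |a i * ∏ j : Fin n, (φ j) (e i)| := Finset.abs_sum_le_sum_abs _ _
      _ = ∑ i : Fin m, |a i| * ∏ j : Fin n, (ψ j) (e i) := by
          refine Finset.sum_congr rfl fun i _ => ?_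
          rw [abs_mul, Finset.abs_prod]
          congr 1
          exact Finset.prod_congr rfl fun j _ => (hψe j i).symm
  · -- sSup S2 ≤ sSup S1
    refine csSup_le hne2 ?_
    rintro r ⟨φ, hφ, rfl⟩
    set θ : ℕ → ℝ := fun i => if h : i < m then (if 0 ≤ a ⟨i, h⟩ then 1 else -1) else 1
      with hθdef
    have hθsign : ∀ i, θ i = 1 ∨ θ i = -1 := fun i => by
      rw [hθdef]
      by_cases h : i < m
      · by_cases h2 : 0 ≤ a ⟨i, h⟩ <;> simp [h, h2]
      · simp [h]
    set j0 : Fin n := ⟨0, by omega⟩ with hj0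
    set Θ : Fin n → ℕ → ℝ := fun j i => if j = j0 then θ i else 1 with hΘdef
    have hΘsign : ∀ j i, Θ j i = 1 ∨ Θ j i = -1 := fun j i => by
      simp only [hΘdef]
      by_cases h : j = j0
      · rw [if_pos h]; exact hθsign i
      · rw [if_neg h]; left; rfl
    set ψ : Fin n → E →L[ℝ] ℝ := fun j => T (φ j) (Θ j) with hψ
    have hmem : (∑ i : Fin m, |a i| * ∏ j : Fin n, (φ j) (e i)) ∈ S1 := by
      refine ⟨ψ, fun j => hTnorm _ _ (hφ j).1 (hΘsign j), ?_⟩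
      have hkey : (∑ i : Fin m, a i * ∏ j : Fin n, (ψ j) (e i))
          = ∑ i : Fin m, |a i| * ∏ j : Fin n, (φ j) (e i) := by
        refine Finset.sum_congr rfl fun i _ => ?_
        have h1 : ∀ j : Fin n, ψ j (e i) = Θ j i * φ j (e i) := fun j => hTe _ _ _
        rw [Finset.prod_congr rfl fun j _ => h1 j, Finset.prod_mul_distrib]
        have h2 : (∏ j : Fin n, Θ j (i:ℕ)) = θ i := by
          simp only [hΘdef]
          rw [Finset.prod_ite_eq' Finset.univ j0 (fun _ => θ (i:ℕ))]
          simp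
        rw [h2]
        have h3 : a i * θ (i:ℕ) = |a i| := by
          rw [hθdef]
          simp only [i.isLt, dif_pos, Fin.eta]
          by_cases h : 0 ≤ a i
          · simp [h, abs_of_nonneg h]
          · simp [h, abs_of_neg (lt_of_not_ge h)]
        rw [← mul_assoc, h3]
      rw [hkey]
      rw [abs_of_nonneg]
      refine Finset.sum_nonneg fun i _ => mul_nonneg (abs_nonneg _)
        (Finset.prod_nonneg fun j _ => (hφ j).2 _ (he _))
    exact le_csSup ⟨C, fun r hr => hbdd1 r hr⟩ hmem
end
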